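/- Let K ⊂ ℝⁿ be a closed convex set containing the origin in its interior. If C ⊂ ℝⁿ is a bounded closed convex set such that K = C*, then K̂ ⊆ C, where K̂ = {y ∈ K* : ∃ x ∈ K, ⟨x, y⟩ = 1}. -/

import Mathlib

open RealInnerProductSpace

variable {n : ℕ}

/-- The polar of a set `K`. -/
def polar (K : Set (EuclideanSpace ℝ (Fin n))) : Set (EuclideanSpace ℝ (Fin n)) :=
  {y | ∀ x ∈ K, ⟪x, y⟫ ≤ 1}

/-- The set `K̂` of points of the polar attaining value 1 on `K`. -/
def hatK (K : Set (EuclideanSpace ℝ (Fin n))) : Set (EuclideanSpace ℝ (Fin n)) :=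
  {y ∈ polar K | ∃ x ∈ K, ⟪x, y⟫ = 1}

/-- A function is sublinear if it is convex and positively homogeneous. -/
def IsSublinear (σ : EuclideanSpace ℝ (Fin n) → ℝ) : Prop :=
  ConvexOn ℝ Set.univ σ ∧ ∀ t : ℝ, 0 < t → ∀ x, σ (t • x) = t * σ x

/-- The recession cone of `K`. -/
def recCone (K : Set (EuclideanSpace ℝ (Fin n))) : Set (EuclideanSpace ℝ (Fin n)) :=
  {x ∈ K | ∀ t : ℝ, 0 < t → t • x ∈ K}

/-- The support function of a set `T`, as `x ↦ sup_{y ∈ T} ⟪x, y⟫`. -/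
noncomputable def suppFn (T : Set (EuclideanSpace ℝ (Fin n)))
    (x : EuclideanSpace ℝ (Fin n)) : ℝ :=
  sSup ((fun y => ⟪x, y⟫) '' T)

theorem stmt1 (K C : Set (EuclideanSpace ℝ (Fin n)))
    (hKcl : IsClosed K) (hKconv : Convex ℝ K) (h0 : (0 : EuclideanSpace ℝ (Fin n)) ∈ interior K)
    (hCb : Bornology.IsBounded C) (hCcl : IsClosed C) (hCconv : Convex ℝ C)
    (hKC : K = polar C) :
    hatK K ⊆ C := by
  rintro y ⟨hyP, x, hxK, hxy⟩
  -- empty case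
  rcases C.eq_empty_or_nonempty with hCe | ⟨c₀, hc₀⟩
  · exfalso
    have hKuniv : K = Set.univ := by
      rw [hKC, hCe]; ext z; simp [polar]
    have := hyP ((2 : ℝ) • x) (by rw [hKuniv]; trivial)
    rw [real_inner_smul_left, hxy] at this
    linarith
  -- D = [0,1] • C
  set D : Set (EuclideanSpace ℝ (Fin n)) :=
    (fun p : ℝ × EuclideanSpace ℝ (Fin n) => p.1 • p.2) '' (Set.Icc (0:ℝ) 1 ×ˢ C) with hD
  have hDmem : ∀ z, z ∈ D ↔ ∃ t ∈ Set.Icc (0:ℝ) 1, ∃ c ∈ C, z = t • c := by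
    intro z
    constructor
    · rintro ⟨⟨t, c⟩, ⟨ht, hc⟩, rfl⟩; exact ⟨t, ht, c, hc, rfl⟩
    · rintro ⟨t, ht, c, hc, rfl⟩; exact ⟨⟨t, c⟩, ⟨ht, hc⟩, rfl⟩
  have hDconv : Convex ℝ D := by
    rintro z1 hz1 z2 hz2 a b ha hb hab
    rw [hDmem] at hz1 hz2 ⊢
    obtain ⟨t1, ht1, c1, hc1, rfl⟩ := hz1
    obtain ⟨t2, ht2, c2, hc2, rfl⟩ := hz2
    set s := a * t1 + b * t2 with hs
    have hs0 : 0 ≤ s := by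
      have := mul_nonneg ha ht1.1; have := mul_nonneg hb ht2.1; linarith
    rcases eq_or_lt_of_le hs0 with hseq | hspos
    · refine ⟨0, ⟨le_refl 0, zero_le_one⟩, c1, hc1, ?_⟩
      have h1 : a * t1 = 0 := by nlinarith [mul_nonneg ha ht1.1, mul_nonneg hb ht2.1]
      have h2 : b * t2 = 0 := by nlinarith [mul_nonneg ha ht1.1, mul_nonneg hb ht2.1]
      rw [zero_smul, smul_smul, smul_smul, h1, h2, zero_smul, zero_smul, add_zero]
    · refine ⟨s, ⟨hs0, by nlinarith [ht1.2, ht2.2]⟩,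
        (a * t1 / s) • c1 + (b * t2 / s) • c2, ?_, ?_⟩
      · exact hCconv hc1 hc2 (div_nonneg (mul_nonneg ha ht1.1) hs0)
          (div_nonneg (mul_nonneg hb ht2.1) hs0) (by field_simp; exact hs.symm)
      · have e1 : s * (a * t1 / s) = a * t1 := by field_simp
        have e2 : s * (b * t2 / s) = b * t2 := by field_simp
        rw [smul_add, smul_smul, smul_smul, smul_smul, smul_smul, e1, e2]
  have hDcomp : IsCompact D :=
    ((isCompact_Icc.prod (Metric.isCompact_of_isClosed_isBounded hCcl hCb)).image
      (continuous_fst.smul continuous_snd))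
  -- y ∈ D
  have hyD : y ∈ D := by
    by_contra hyD
    obtain ⟨f, u, hfD, hfy⟩ :=
      geometric_hahn_banach_closed_point hDconv hDcomp.isClosed hyD
    have h0D : (0 : EuclideanSpace ℝ (Fin n)) ∈ D := by
      rw [hDmem]; exact ⟨0, ⟨le_refl 0, zero_le_one⟩, c₀, hc₀, (zero_smul ℝ _).symm⟩
    have hu : 0 < u := by have := hfD 0 h0D; simpa using this
    set v := (InnerProductSpace.toDual ℝ (EuclideanSpace ℝ (Fin n))).symm f with hv
    have hvf : ∀ z, ⟪v, z⟫ = f z := fun z => InnerProductSpace.toDual_symm_apply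
    have hxK' : u⁻¹ • v ∈ K := by
      rw [hKC]
      intro c hc
      have h1 : f c < u := hfD c (by rw [hDmem]; exact ⟨1, ⟨zero_le_one, le_refl 1⟩, c, hc, (one_smul ℝ c).symm⟩)
      rw [real_inner_comm, real_inner_smul_left, hvf]
      calc u⁻¹ * f c ≤ u⁻¹ * u := by
            exact mul_le_mul_of_nonneg_left h1.le (inv_nonneg.mpr hu.le)
        _ = 1 := inv_mul_cancel₀ hu.ne'
    have := hyP _ hxK'
    rw [real_inner_smul_left, hvf] at this
    have : f y ≤ u := by
      by_contra h
      push_neg at h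
      nlinarith [mul_lt_mul_of_pos_left h (inv_pos.mpr hu), inv_mul_cancel₀ hu.ne']
    linarith
  -- finish: y = t • c with attainment forces t = 1
  rw [hDmem] at hyD
  obtain ⟨t, ⟨ht0, ht1⟩, c, hc, rfl⟩ := hyD
  have hxc : ⟪x, c⟫ ≤ 1 := by
    rw [hKC] at hxK
    have := hxK c hc
    rwa [real_inner_comm]
  rw [real_inner_smul_right] at hxy
  have ht : t = 1 := by nlinarith
  rw [ht, one_smul]
  exact hc
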